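/- Sector lemma (Lemma 6 of the paper). Let c(n) ∈ (0,1) be the constant such that the Lebesgue measure of every sector R(x,t,w) equals c(n) times the measure of the ball B(x,t). Let 0 < λ < c(n), let E ⊆ ℝⁿ be measurable, and suppose that for some x ∈ ℝⁿ, t > 0 and unit vector w one has R(x,t,w) ⊆ E. Then for every y ∈ R(x,t,w) the ball B(y,t) is contained in E*_λ. -/

import Mathlib

open MeasureTheory ENNReal Metric Set

noncomputable section

/-- The sector `R(x,t,w) = {x} ∪ {y ∈ B(x,t) : ⟨(y-x)/‖y-x‖, w⟩ ≥ √3/2}`. -/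
def sector (n : ℕ) (x : EuclideanSpace ℝ (Fin n)) (t : ℝ) (w : EuclideanSpace ℝ (Fin n)) :
    Set (EuclideanSpace ℝ (Fin n)) :=
  insert x {y ∈ Metric.ball x t | Real.sqrt 3 / 2 ≤ (inner ℝ (‖y - x‖⁻¹ • (y - x)) w : ℝ)}

/-- The extension `E*_λ = {z : ∃ open ball B' ∋ z with |E ∩ B'| > λ |B'|}`. -/
def ext (n : ℕ) (lam : ℝ) (E : Set (EuclideanSpace ℝ (Fin n))) :
    Set (EuclideanSpace ℝ (Fin n)) :=
  {z | ∃ (c : EuclideanSpace ℝ (Fin n)) (r : ℝ), z ∈ Metric.ball c r ∧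
    ENNReal.ofReal lam * volume (Metric.ball c r) < volume (E ∩ Metric.ball c r)}

set_option maxHeartbeats 1000000

/-- If `p` and `q` both make angle at most `30°` with the unit vector `w`, then the angle
between them is at most `60°`, i.e. `⟪p,q⟫ ≥ ‖p‖‖q‖/2`. -/
lemma inner_ge_of_angle {H : Type*} [NormedAddCommGroup H] [InnerProductSpace ℝ H]
    (w p q : H) (hw : ‖w‖ = 1)
    (hp : Real.sqrt 3 / 2 * ‖p‖ ≤ (inner ℝ p w : ℝ))
    (hq : Real.sqrt 3 / 2 * ‖q‖ ≤ (inner ℝ q w : ℝ)) :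
    ‖p‖ * ‖q‖ / 2 ≤ (inner ℝ p q : ℝ) := by
  have hs : Real.sqrt 3 ^ 2 = 3 := Real.sq_sqrt (by norm_num)
  have hs0 : (0:ℝ) ≤ Real.sqrt 3 := Real.sqrt_nonneg 3
  set a : ℝ := (inner ℝ p w : ℝ) with ha
  set b : ℝ := (inner ℝ q w : ℝ) with hb
  have ha0 : 0 ≤ a := le_trans (by positivity) hp
  have hb0 : 0 ≤ b := le_trans (by positivity) hq
  set p' : H := p - a • w with hp'
  set q' : H := q - b • w with hq'
  have hww : (inner ℝ w w : ℝ) = 1 := by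
    rw [real_inner_self_eq_norm_sq, hw]; norm_num
  have hp'w : (inner ℝ p' w : ℝ) = 0 := by
    rw [hp', inner_sub_left, real_inner_smul_left, hww]; ring_nf; rw [← ha, sub_self]
  have hq'w : (inner ℝ q' w : ℝ) = 0 := by
    rw [hq', inner_sub_left, real_inner_smul_left, hww]; ring_nf; rw [← hb, sub_self]
  have hpn : ‖p'‖ ^ 2 = ‖p‖ ^ 2 - a ^ 2 := by
    have := @norm_sub_sq_real H _ _ p (a • w)
    rw [real_inner_smul_right, ← ha, norm_smul, hw] at this
    simp only [hp'] at *
    rw [this]; simp [abs_of_nonneg ha0]; ring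
  have hqn : ‖q'‖ ^ 2 = ‖q‖ ^ 2 - b ^ 2 := by
    have := @norm_sub_sq_real H _ _ q (b • w)
    rw [real_inner_smul_right, ← hb, norm_smul, hw] at this
    simp only [hq'] at *
    rw [this]; simp [abs_of_nonneg hb0]; ring
  have hpa : 3 / 4 * ‖p‖ ^ 2 ≤ a ^ 2 := by
    nlinarith [mul_le_mul hp hp (by positivity) ha0, norm_nonneg p]
  have hqa : 3 / 4 * ‖q‖ ^ 2 ≤ b ^ 2 := by
    nlinarith [mul_le_mul hq hq (by positivity) hb0, norm_nonneg q]
  have hp'le : ‖p'‖ ≤ ‖p‖ / 2 := by nlinarith [norm_nonneg p', norm_nonneg p]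
  have hq'le : ‖q'‖ ≤ ‖q‖ / 2 := by nlinarith [norm_nonneg q', norm_nonneg q]
  have hCS : -(‖p'‖ * ‖q'‖) ≤ (inner ℝ p' q' : ℝ) :=
    neg_le_of_abs_le (abs_real_inner_le_norm p' q')
  have hdecomp : (inner ℝ p q : ℝ) = a * b + (inner ℝ p' q' : ℝ) := by
    have hpe : p = p' + a • w := by rw [hp']; abel
    have hqe : q = q' + b • w := by rw [hq']; abel
    calc (inner ℝ p q : ℝ) = (inner ℝ (p' + a • w) (q' + b • w) : ℝ) := by rw [← hpe, ← hqe]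
    _ = (inner ℝ p' q' : ℝ) + b * (inner ℝ p' w : ℝ) + a * (inner ℝ w q' : ℝ)
        + a * (b * (inner ℝ w w : ℝ)) := by
        simp [inner_add_left, inner_add_right, real_inner_smul_left, real_inner_smul_right]
        ring
    _ = a * b + (inner ℝ p' q' : ℝ) := by
        rw [hp'w, hww, show (inner ℝ w q' : ℝ) = 0 from
          (real_inner_comm q' w ▸ hq'w : (inner ℝ w q' : ℝ) = 0)]; ring
  have h1 : 3 / 4 * (‖p‖ * ‖q‖) ≤ a * b := by
    have key := mul_le_mul hp hq (by positivity) ha0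
    have heq : Real.sqrt 3 / 2 * ‖p‖ * (Real.sqrt 3 / 2 * ‖q‖) = 3 / 4 * (‖p‖ * ‖q‖) := by
      rw [show (3:ℝ) / 4 = Real.sqrt 3 ^ 2 / 4 by rw [hs]]; ring
    rw [heq] at key; linarith
  have h2 : ‖p'‖ * ‖q'‖ ≤ ‖p‖ / 2 * (‖q‖ / 2) :=
    mul_le_mul hp'le hq'le (norm_nonneg q') (by positivity)
  linarith [hdecomp, hCS, h1, h2]

/-- Every point of the sector is within distance `< t` of the vertex and makes angle
at most `30°` with the axis. -/
lemma sector_mem (n : ℕ) (x w : EuclideanSpace ℝ (Fin n)) (t : ℝ) (ht : 0 < t)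
    (p : EuclideanSpace ℝ (Fin n)) (hp : p ∈ sector n x t w) :
    ‖p - x‖ < t ∧ Real.sqrt 3 / 2 * ‖p - x‖ ≤ (inner ℝ (p - x) w : ℝ) := by
  rcases hp with rfl | ⟨hpb, hpi⟩
  · simp [sub_self, ht]
  · have hnorm : ‖p - x‖ < t := by rwa [mem_ball, dist_eq_norm] at hpb
    refine ⟨hnorm, ?_⟩
    rw [real_inner_smul_left] at hpi
    have hs0 : (0:ℝ) < Real.sqrt 3 / 2 := by positivity
    have hr : 0 < ‖p - x‖ := by
      rcases eq_or_lt_of_le (norm_nonneg (p - x)) with h | h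
      · exfalso; rw [← h] at hpi; simp at hpi; linarith
      · exact h
    have h1 := mul_le_mul_of_nonneg_left hpi hr.le
    rw [← mul_assoc, mul_inv_cancel₀ hr.ne', one_mul] at h1
    linarith

/-- Sector lemma: with `c(n) ∈ (0,1)` the constant with `|R(x,t,w)| = c(n)|B(x,t)|`, if
`0 < λ < c(n)`, `E` is measurable and `R(x,t,w) ⊆ E`, then `B(y,t) ⊆ E*_λ` for every
`y ∈ R(x,t,w)`. -/
theorem sector_lemma (n : ℕ) (c : ℝ) (hc0 : 0 < c) (hc1 : c < 1)
    (hcn : ∀ (x w : EuclideanSpace ℝ (Fin n)) (t : ℝ), 0 < t → ‖w‖ = 1 →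
      volume (sector n x t w) = ENNReal.ofReal c * volume (Metric.ball x t))
    (lam : ℝ) (hlam0 : 0 < lam) (hlamc : lam < c)
    (E : Set (EuclideanSpace ℝ (Fin n))) (hE : MeasurableSet E)
    (x w : EuclideanSpace ℝ (Fin n)) (t : ℝ) (ht : 0 < t) (hw : ‖w‖ = 1)
    (hsub : sector n x t w ⊆ E) :
    ∀ y ∈ sector n x t w, Metric.ball y t ⊆ ext n lam E := by
  intro y hy z hz
  have hsec_ball : sector n x t w ⊆ Metric.ball y t := by
    intro p hp
    obtain ⟨hp1, hp2⟩ := sector_mem n x w t ht p hp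
    obtain ⟨hy1, hy2⟩ := sector_mem n x w t ht y hy
    have hinner := inner_ge_of_angle w (p - x) (y - x) hw hp2 hy2
    rw [mem_ball, dist_eq_norm, show p - y = (p - x) - (y - x) by abel]
    set u := p - x
    set v := y - x
    have h2 : ‖u - v‖ ^ 2 = ‖u‖ ^ 2 - 2 * (inner ℝ u v : ℝ) + ‖v‖ ^ 2 :=
      @norm_sub_sq_real _ _ _ u v
    have hlt : ‖u - v‖ ^ 2 < t ^ 2 := by
      rcases le_total ‖u‖ ‖v‖ with h | h
      · nlinarith [norm_nonneg u, norm_nonneg v]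
      · nlinarith [norm_nonneg u, norm_nonneg v]
    nlinarith [norm_nonneg (u - v)]
  refine ⟨y, t, hz, ?_⟩
  have hVy : volume (Metric.ball y t) = volume (Metric.ball x t) := by
    rw [Measure.addHaar_ball_center volume y, Measure.addHaar_ball_center volume x]
  have hmono : ENNReal.ofReal c * volume (Metric.ball x t) ≤ volume (E ∩ Metric.ball y t) := by
    rw [← hcn x w t ht hw]
    exact measure_mono (subset_inter hsub hsec_ball)
  have hV0 : volume (Metric.ball x t) ≠ 0 := (measure_ball_pos volume x ht).ne'
  have hVtop : volume (Metric.ball x t) ≠ ⊤ := measure_ball_lt_top.ne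
  calc ENNReal.ofReal lam * volume (Metric.ball y t)
      = ENNReal.ofReal lam * volume (Metric.ball x t) := by rw [hVy]
    _ < ENNReal.ofReal c * volume (Metric.ball x t) :=
        ENNReal.mul_lt_mul_left hV0 hVtop
          ((ENNReal.ofReal_lt_ofReal_iff hc0).mpr hlamc)
    _ ≤ volume (E ∩ Metric.ball y t) := hmono
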